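/- For every τ_0 ∈ (0,1), c ∈ (0,1), and a > 0, there exist constants c_1, C_1 > 0 and N such that the following holds for all n ≥ N: for all M dividing n with 3 ≤ M ≤ a·n^{τ_0}, all δ ∈ (0,1) with n^δ an even integer and n^δ < n/M, and S_0 = n^{τ_0}, one has c_1·n²/S_0 ≤ E_1+E_2+E_3+E_4 ≤ C_1·(n²/S_0 + M·n^{2δ}/S_0²). -/

import Mathlib

open Real Finset

/-- The `i`-th point of the discrete circle `P_n ⊂ ℝ²`:
`x_i = (cos(2πi/n), sin(2πi/n))`. -/
noncomputable def circlePt (n : ℕ) (i : Fin n) : EuclideanSpace ℝ (Fin 2) :=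
  WithLp.toLp 2 (fun j => if j = 0 then Real.cos (2 * Real.pi * (i.val : ℝ) / n)
           else Real.sin (2 * Real.pi * (i.val : ℝ) / n))

/-- With the indices `{0, …, n−1}` partitioned into `M` blocks of `n/M` consecutive indices,
`i ∼ j` iff `i` and `j` lie in the same block. -/
def sameBlock (n M : ℕ) (i j : Fin n) : Prop :=
  i.val / (n / M) = j.val / (n / M)

instance (n M : ℕ) (i j : Fin n) : Decidable (sameBlock n M i j) := by
  unfold sameBlock; infer_instance

/-- `T_m` for a block with last index `im` (indices mod `n`) and `d = n^δ`:
pairs `(k,ℓ)` with `im − d/2 + 1 ≤ k ≤ im` and `im + 1 ≤ ℓ ≤ im + d/2`. -/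
def TmSet (n im d : ℕ) : Finset (Fin n × Fin n) :=
  Finset.univ.filter (fun p : Fin n × Fin n =>
    (∃ a < d / 2, p.1.val = (im + n - a) % n) ∧
    (∃ b < d / 2, p.2.val = (im + (b + 1)) % n))

/-- `T_0`: ordered pairs of distinct indices lying in different blocks. -/
def T0Set (n M : ℕ) : Finset (Fin n × Fin n) :=
  Finset.univ.filter (fun p : Fin n × Fin n => p.1 ≠ p.2 ∧ ¬ sameBlock n M p.1 p.2)

/-- `T_0 \ ∪_{1 ≤ m ≤ M} T_m`, where the last index of block `m` is `m·(n/M) − 1`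
(0-based). -/
def TDiff (n M d : ℕ) : Finset (Fin n × Fin n) :=
  T0Set n M \ (Finset.range M).biUnion (fun m => TmSet n ((m + 1) * (n / M) - 1) d)

/-- `E₁ = Σ_{(k,ℓ): k≠ℓ, x_k ∼ x_ℓ} 1/(1 + S₀²‖x_k − x_ℓ‖²)`. -/
noncomputable def E1 (n M : ℕ) (S₀ : ℝ) : ℝ :=
  ∑ p ∈ Finset.univ.filter
      (fun p : Fin n × Fin n => p.1 ≠ p.2 ∧ sameBlock n M p.1 p.2),
    (1 + S₀ ^ 2 * ‖circlePt n p.1 - circlePt n p.2‖ ^ 2)⁻¹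

/-- `E₂ = |T_0 \ ∪_m T_m| / (1 + c²S₀²)`. -/
noncomputable def E2 (n M d : ℕ) (c S₀ : ℝ) : ℝ :=
  ((TDiff n M d).card : ℝ) / (1 + c ^ 2 * S₀ ^ 2)

/-- `E₃ = M·Σ_{j=1}^{d/2} j/(1 + c²S₀²)`. -/
noncomputable def E3 (n M d : ℕ) (c S₀ : ℝ) : ℝ :=
  (M : ℝ) * ∑ j ∈ Finset.Icc 1 (d / 2), (j : ℝ) / (1 + c ^ 2 * S₀ ^ 2)

/-- `E₄ = M·Σ_{j=1}^{d/2 − 1} j/(1 + c²S₀²)`. -/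
noncomputable def E4 (n M d : ℕ) (c S₀ : ℝ) : ℝ :=
  (M : ℝ) * ∑ j ∈ Finset.Icc 1 (d / 2 - 1), (j : ℝ) / (1 + c ^ 2 * S₀ ^ 2)

section AuxStmt6

set_option maxHeartbeats 1600000

lemma dist_sq_eq (n : ℕ) (k l : Fin n) (m : ℕ) (hm : l.val = k.val + m) :
    ‖circlePt n k - circlePt n l‖ ^ 2 = 2 - 2 * Real.cos (2 * π * m / n) := by
  rw [EuclideanSpace.norm_eq, Real.sq_sqrt (by positivity)]
  have h0 : ∀ i : Fin n, ∀ j, (circlePt n i) j = if j = 0 then Real.cos (2 * Real.pi * (i.val : ℝ) / n)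
           else Real.sin (2 * Real.pi * (i.val : ℝ) / n) := fun _ _ => rfl
  have hsub : ∀ j, (circlePt n k - circlePt n l) j = circlePt n k j - circlePt n l j :=
    fun _ => rfl
  rw [Fin.sum_univ_two]
  simp only [hsub, h0]
  norm_num
  set A := 2 * π * (k.val : ℝ) / n
  set B := 2 * π * (l.val : ℝ) / n
  have hAB : B - A = 2 * π * m / n := by
    simp only [A, B, hm]
    push_cast
    ring
  have h1 : Real.cos (2 * π * m / n) = Real.cos B * Real.cos A + Real.sin B * Real.sin A := by
    rw [← hAB, Real.cos_sub]
  rw [h1]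
  have := Real.sin_sq_add_cos_sq A
  have := Real.sin_sq_add_cos_sq B
  nlinarith [this]

lemma dist_sq_le (n m : ℕ) : 2 - 2 * Real.cos (2 * π * m / n) ≤ (2 * π * m / n) ^ 2 := by
  have := Real.one_sub_sq_div_two_le_cos (x := 2 * π * m / n)
  nlinarith

lemma dist_sq_ge (n m : ℕ) (hn : 0 < n) (h2m : 2 * m ≤ n) :
    16 * m ^ 2 / n ^ 2 ≤ 2 - 2 * Real.cos (2 * π * m / n) := by
  have hn' : (0:ℝ) < n := by exact_mod_cast hn
  have hx : 2 * π * m / n = 2 * (π * m / n) := by ring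
  rw [hx, Real.cos_two_mul]
  have hs : 2 * (m:ℝ) / n ≤ Real.sin (π * m / n) := by
    have h1 : (0:ℝ) ≤ π * m / n := by positivity
    have h2 : π * m / n ≤ π / 2 := by
      rw [div_le_div_iff₀ hn' two_pos]
      have : (2:ℝ) * m ≤ n := by exact_mod_cast h2m
      nlinarith [Real.pi_pos]
    have := Real.mul_le_sin h1 h2
    calc 2 * (m:ℝ) / n = 2 / π * (π * m / n) := by
          field_simp
        _ ≤ Real.sin (π * m / n) := this
  have hs0 : (0:ℝ) ≤ 2 * m / n := by positivity
  have hsq : (2 * (m:ℝ) / n) ^ 2 ≤ Real.sin (π * m / n) ^ 2 := by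
    exact pow_le_pow_left₀ hs0 hs 2
  have hr : (2 * (m:ℝ) / n) ^ 2 = 4 * m ^ 2 / n ^ 2 := by ring
  have := Real.sin_sq_add_cos_sq (π * m / n)
  have hr2 : 16 * (m:ℝ) ^ 2 / n ^ 2 = 4 * (4 * m ^ 2 / n ^ 2) := by ring
  rw [hr] at hsq
  rw [hr2]
  nlinarith [hsq, this]

lemma E1_ge (n M B J : ℕ) (S₀ : ℝ) (hn : n = M * B) (hM : 0 < M) (hJB : J ≤ B / 2)
    (hJ1 : 1 ≤ J)
    (hterm : ∀ j : ℕ, 1 ≤ j → j ≤ J →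
      ((1:ℝ) + 4 * π ^ 2)⁻¹ ≤ (1 + S₀ ^ 2 * (2 - 2 * Real.cos (2 * π * j / n)))⁻¹) :
    (M : ℝ) * ((B : ℝ) - J) * J * ((1:ℝ) + 4 * π ^ 2)⁻¹ ≤ E1 n M S₀ := by
  have hB : 0 < B := by omega
  have hn0 : 0 < n := by rw [hn]; positivity
  have hnM : n / M = B := by rw [hn, Nat.mul_div_cancel_left _ hM]
  have hdiv : ∀ r q : ℕ, r < B → (q * B + r) / B = q := by
    intro r q hr
    rw [Nat.mul_comm, Nat.mul_add_div hB, Nat.div_eq_of_lt hr]; omega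
  set T : Finset (ℕ × ℕ × ℕ) := (range M) ×ˢ ((range (B - J)) ×ˢ (Icc 1 J)) with hT
  set e : ℕ × ℕ × ℕ → Fin n × Fin n := fun t =>
    (⟨(t.1 * B + t.2.1) % n, Nat.mod_lt _ hn0⟩, ⟨(t.1 * B + t.2.1 + t.2.2) % n, Nat.mod_lt _ hn0⟩)
    with he
  have hmem : ∀ t ∈ T, t.1 < M ∧ t.2.1 < B - J ∧ 1 ≤ t.2.2 ∧ t.2.2 ≤ J := by
    intro t ht
    simp only [hT, Finset.mem_product, Finset.mem_range, Finset.mem_Icc] at ht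
    exact ⟨ht.1, ht.2.1, ht.2.2.1, ht.2.2.2⟩
  have hlt : ∀ t ∈ T, t.1 * B + t.2.1 + t.2.2 < n ∧ t.2.1 + t.2.2 < B := by
    intro t ht
    obtain ⟨h1, h2, h3, h4⟩ := hmem t ht
    have hXn : t.1 * B + B ≤ n := by
      have : (t.1 + 1) * B ≤ M * B := Nat.mul_le_mul_right B h1
      rw [Nat.add_mul, Nat.one_mul] at this
      omega
    omega
  have hval : ∀ t ∈ T, (e t).1.val = t.1 * B + t.2.1 ∧ (e t).2.val = t.1 * B + t.2.1 + t.2.2 := by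
    intro t ht
    obtain ⟨hlt1, hlt2⟩ := hlt t ht
    constructor
    · exact Nat.mod_eq_of_lt (by omega)
    · exact Nat.mod_eq_of_lt hlt1
  have hsubF : ∀ t ∈ T, e t ∈ Finset.univ.filter
      (fun p : Fin n × Fin n => p.1 ≠ p.2 ∧ sameBlock n M p.1 p.2) := by
    intro t ht
    obtain ⟨h1, h2, h3, h4⟩ := hmem t ht
    obtain ⟨hv1, hv2⟩ := hval t ht
    obtain ⟨hlt1, hlt2⟩ := hlt t ht
    rw [Finset.mem_filter]
    refine ⟨Finset.mem_univ _, ?_, ?_⟩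
    · intro hcontra
      have : (e t).1.val = (e t).2.val := by rw [hcontra]
      omega
    · unfold sameBlock
      rw [hnM, hv1, hv2]
      rw [hdiv _ _ (by omega), show t.1 * B + t.2.1 + t.2.2 = t.1 * B + (t.2.1 + t.2.2) by ring,
        hdiv _ _ (by omega)]
  have hinj : ∀ t ∈ T, ∀ s ∈ T, e t = e s → t = s := by
    intro t ht s hs hes
    obtain ⟨hv1, hv2⟩ := hval t ht
    obtain ⟨hw1, hw2⟩ := hval s hs
    obtain ⟨h1, h2, h3, h4⟩ := hmem t ht
    obtain ⟨g1, g2, g3, g4⟩ := hmem s hs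
    have e1 : (e t).1.val = (e s).1.val := by rw [hes]
    have e2 : (e t).2.val = (e s).2.val := by rw [hes]
    rw [hv1, hw1] at e1
    rw [hv2, hw2] at e2
    have hq : t.1 = s.1 := by
      have := hdiv t.2.1 t.1 (by omega)
      have := hdiv s.2.1 s.1 (by omega)
      rw [← e1] at *
      omega
    have hBt : t.1 * B = s.1 * B := by rw [hq]
    have : t.2.1 = s.2.1 := by omega
    have : t.2.2 = s.2.2 := by omega
    ext <;> omega
  have step1 : ∑ p ∈ T.image e, (1 + S₀ ^ 2 * ‖circlePt n p.1 - circlePt n p.2‖ ^ 2)⁻¹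
      ≤ E1 n M S₀ := by
    apply Finset.sum_le_sum_of_subset_of_nonneg
    · intro p hp
      obtain ⟨t, ht, rfl⟩ := Finset.mem_image.mp hp
      exact hsubF t ht
    · intro p _ _
      positivity
  rw [Finset.sum_image hinj] at step1
  have step2 : ∀ t ∈ T, ((1:ℝ) + 4 * π ^ 2)⁻¹ ≤
      (1 + S₀ ^ 2 * ‖circlePt n (e t).1 - circlePt n (e t).2‖ ^ 2)⁻¹ := by
    intro t ht
    obtain ⟨hv1, hv2⟩ := hval t ht
    obtain ⟨h1, h2, h3, h4⟩ := hmem t ht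
    rw [dist_sq_eq n (e t).1 (e t).2 t.2.2 (by omega)]
    exact hterm t.2.2 h3 h4
  have step3 : (T.card : ℝ) * ((1:ℝ) + 4 * π ^ 2)⁻¹ ≤
      ∑ t ∈ T, (1 + S₀ ^ 2 * ‖circlePt n (e t).1 - circlePt n (e t).2‖ ^ 2)⁻¹ := by
    have := Finset.card_nsmul_le_sum T _ _ step2
    rwa [nsmul_eq_mul] at this
  have hcard : T.card = M * ((B - J) * J) := by
    simp [hT, Nat.card_Icc]
  have hJle : J ≤ B := by omega
  calc (M : ℝ) * ((B : ℝ) - J) * J * ((1:ℝ) + 4 * π ^ 2)⁻¹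
      = (T.card : ℝ) * ((1:ℝ) + 4 * π ^ 2)⁻¹ := by
        rw [hcard]; push_cast [Nat.cast_sub hJle]; ring
    _ ≤ _ := le_trans step3 step1

lemma div_eq_lt_add {B v w : ℕ} (hB : 0 < B) (h : v / B = w / B) : w < v + B := by
  have d1 := Nat.div_add_mod v B
  have d2 := Nat.div_add_mod w B
  have m2 := Nat.mod_lt w hB
  set X := B * (v / B) with hX
  set Y := B * (w / B) with hY
  have hXY : Y = X := by rw [hY, hX, h]
  omega

lemma E1_le (n M B : ℕ) (S₀ : ℝ) (hnM : n / M = B) (hB : 0 < B)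
    (g : ℕ → ℝ) (hg0 : ∀ j, 0 ≤ g j)
    (hterm : ∀ m : ℕ, 1 ≤ m → m ≤ B - 1 →
      (1 + S₀ ^ 2 * (2 - 2 * Real.cos (2 * π * m / n)))⁻¹ ≤ g m) :
    E1 n M S₀ ≤ 2 * n * ∑ j ∈ Icc 1 (B - 1), g j := by
  classical
  set f : Fin n × Fin n → ℝ :=
    fun p => (1 + S₀ ^ 2 * ‖circlePt n p.1 - circlePt n p.2‖ ^ 2)⁻¹ with hf
  set F : Finset (Fin n × Fin n) := Finset.univ.filter
      (fun p : Fin n × Fin n => p.1 ≠ p.2 ∧ sameBlock n M p.1 p.2) with hF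
  set F₁ : Finset (Fin n × Fin n) := F.filter (fun p => p.1.val < p.2.val) with hF₁
  have hsplit : E1 n M S₀ = ∑ p ∈ F₁, f p + ∑ p ∈ F.filter (fun p => ¬ p.1.val < p.2.val), f p := by
    rw [E1, ← hF, ← Finset.sum_filter_add_sum_filter_not F (fun p => p.1.val < p.2.val) f]
  have hswap : ∑ p ∈ F.filter (fun p => ¬ p.1.val < p.2.val), f p = ∑ p ∈ F₁, f p := by
    apply Finset.sum_bij' (fun p _ => Prod.swap p) (fun p _ => Prod.swap p)
    · intro p hp
      simp only [hF₁, hF, Finset.mem_filter, Finset.mem_univ, true_and, Prod.fst_swap, Prod.snd_swap] at hp ⊢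
      obtain ⟨⟨hne, hsb⟩, hlt⟩ := hp
      have hne' : p.1.val ≠ p.2.val := fun h => hne (Fin.ext h)
      exact ⟨⟨hne.symm, hsb.symm⟩, by omega⟩
    · intro p hp
      simp only [hF₁, hF, Finset.mem_filter, Finset.mem_univ, true_and, Prod.fst_swap, Prod.snd_swap] at hp ⊢
      obtain ⟨⟨hne, hsb⟩, hlt⟩ := hp
      exact ⟨⟨hne.symm, hsb.symm⟩, by omega⟩
    · intro p _; exact Prod.swap_swap p
    · intro p _; exact Prod.swap_swap p
    · intro p _
      simp only [hf, Prod.fst_swap, Prod.snd_swap, norm_sub_rev]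
  have hdiff : ∀ p ∈ F₁, 1 ≤ p.2.val - p.1.val ∧ p.2.val - p.1.val ≤ B - 1 := by
    intro p hp
    simp only [hF₁, hF, Finset.mem_filter, Finset.mem_univ, true_and] at hp
    obtain ⟨⟨hne, hsb⟩, hlt⟩ := hp
    unfold sameBlock at hsb
    rw [hnM] at hsb
    have := div_eq_lt_add hB hsb
    omega
  have hbound : ∀ p ∈ F₁, f p ≤ g (p.2.val - p.1.val) := by
    intro p hp
    obtain ⟨h1, h2⟩ := hdiff p hp
    have hval : p.2.val = p.1.val + (p.2.val - p.1.val) := by omega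
    rw [hf]
    simp only
    rw [dist_sq_eq n p.1 p.2 _ hval]
    exact hterm _ h1 h2
  have hstep : ∑ p ∈ F₁, f p ≤ ∑ p ∈ F₁, g (p.2.val - p.1.val) := Finset.sum_le_sum hbound
  set φ : Fin n × Fin n → Fin n × ℕ := fun p => (p.1, p.2.val - p.1.val) with hφ
  have hφinj : ∀ p ∈ F₁, ∀ q ∈ F₁, φ p = φ q → p = q := by
    intro p hp q hq h
    obtain ⟨hp1, _⟩ := hdiff p hp
    obtain ⟨hq1, _⟩ := hdiff q hq
    simp only [hφ, Prod.mk.injEq] at h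
    obtain ⟨h1, h2⟩ := h
    have : p.2.val = q.2.val := by
      have e1 : p.1.val = q.1.val := by rw [h1]
      omega
    exact Prod.ext h1 (Fin.ext this)
  have himg : ∑ p ∈ F₁, g (p.2.val - p.1.val) = ∑ q ∈ F₁.image φ, g q.2 := by
    rw [Finset.sum_image hφinj]
  have hsub : F₁.image φ ⊆ Finset.univ ×ˢ Icc 1 (B - 1) := by
    intro q hq
    obtain ⟨p, hp, rfl⟩ := Finset.mem_image.mp hq
    obtain ⟨h1, h2⟩ := hdiff p hp
    simp only [Finset.mem_product, Finset.mem_univ, Finset.mem_Icc, hφ]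
    exact ⟨trivial, h1, h2⟩
  have hstep2 : ∑ q ∈ F₁.image φ, g q.2 ≤ ∑ q ∈ Finset.univ ×ˢ Icc 1 (B - 1), g q.2 :=
    Finset.sum_le_sum_of_subset_of_nonneg hsub (fun q _ _ => hg0 q.2)
  have hprod : ∑ q ∈ (Finset.univ : Finset (Fin n)) ×ˢ Icc 1 (B - 1), g q.2
      = (n : ℝ) * ∑ j ∈ Icc 1 (B - 1), g j := by
    rw [Finset.sum_product]
    simp [Finset.sum_const, Finset.card_univ]
  have hone : ∑ p ∈ F₁, f p ≤ (n : ℝ) * ∑ j ∈ Icc 1 (B - 1), g j := by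
    calc ∑ p ∈ F₁, f p ≤ ∑ p ∈ F₁, g (p.2.val - p.1.val) := hstep
      _ = ∑ q ∈ F₁.image φ, g q.2 := himg
      _ ≤ _ := hstep2
      _ = _ := hprod
  rw [hsplit, hswap]
  linarith

lemma sum_min_le (B J₀ : ℕ) (C : ℝ) (hC : 0 ≤ C) (hJ₀ : 1 ≤ J₀) :
    ∑ j ∈ Icc 1 (B - 1), min 1 (C / (j : ℝ) ^ 2) ≤ (J₀ : ℝ) + C / J₀ := by
  rw [← Finset.sum_filter_add_sum_filter_not (Icc 1 (B - 1)) (fun j => j ≤ J₀)]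
  have h1 : ∑ j ∈ (Icc 1 (B - 1)).filter (fun j => j ≤ J₀), min 1 (C / (j : ℝ) ^ 2)
      ≤ (J₀ : ℝ) := by
    calc ∑ j ∈ (Icc 1 (B - 1)).filter (fun j => j ≤ J₀), min 1 (C / (j : ℝ) ^ 2)
        ≤ ∑ j ∈ (Icc 1 (B - 1)).filter (fun j => j ≤ J₀), 1 := by
          apply Finset.sum_le_sum
          intro j _
          exact min_le_left _ _
      _ = ((Icc 1 (B - 1)).filter (fun j => j ≤ J₀)).card := by simp
      _ ≤ ((Icc 1 J₀).card : ℝ) := by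
          have : (Icc 1 (B - 1)).filter (fun j => j ≤ J₀) ⊆ Icc 1 J₀ := by
            intro j hj
            simp only [Finset.mem_filter, Finset.mem_Icc] at hj ⊢
            omega
          exact_mod_cast Finset.card_le_card this
      _ = (J₀ : ℝ) := by rw [Nat.card_Icc]; simp
  have h2 : ∑ j ∈ (Icc 1 (B - 1)).filter (fun j => ¬ j ≤ J₀), min 1 (C / (j : ℝ) ^ 2)
      ≤ C / J₀ := by
    have hsubset : (Icc 1 (B - 1)).filter (fun j => ¬ j ≤ J₀) ⊆ Ioc J₀ (B - 1) := by
      intro j hj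
      simp only [Finset.mem_filter, Finset.mem_Icc] at hj
      simp only [Finset.mem_Ioc]
      omega
    calc ∑ j ∈ (Icc 1 (B - 1)).filter (fun j => ¬ j ≤ J₀), min 1 (C / (j : ℝ) ^ 2)
        ≤ ∑ j ∈ (Icc 1 (B - 1)).filter (fun j => ¬ j ≤ J₀), C * ((j : ℝ) ^ 2)⁻¹ := by
          apply Finset.sum_le_sum
          intro j _
          rw [← div_eq_mul_inv]
          exact min_le_right _ _
      _ ≤ ∑ j ∈ Ioc J₀ (B - 1), C * ((j : ℝ) ^ 2)⁻¹ := by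
          apply Finset.sum_le_sum_of_subset_of_nonneg hsubset
          intro j _ _; positivity
      _ = C * ∑ j ∈ Ioc J₀ (B - 1), ((j : ℝ) ^ 2)⁻¹ := by rw [Finset.mul_sum]
      _ ≤ C * (J₀ : ℝ)⁻¹ := by
          apply mul_le_mul_of_nonneg_left ?_ hC
          by_cases hcase : J₀ ≤ B - 1
          · have := sum_Ioc_inv_sq_le_sub (k := J₀) (n := B - 1) (α := ℝ) (by omega) hcase
            have hB1 : (0:ℝ) ≤ ((B - 1 : ℕ) : ℝ)⁻¹ := by positivity
            linarith
          · rw [Finset.Ioc_eq_empty (by omega), Finset.sum_empty]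
            positivity
      _ = C / J₀ := by rw [div_eq_mul_inv]
  linarith

/-- For every `τ₀ ∈ (0,1)`, `c ∈ (0,1)`, and `a > 0`, there exist constants
`c₁, C₁ > 0` and `N` such that for all `n ≥ N`, all `M ∣ n` with `3 ≤ M ≤ a·n^{τ₀}`, all
`δ ∈ (0,1)` with `n^δ` an even integer `d < n/M`, and `S₀ = n^{τ₀}`:
`c₁·n²/S₀ ≤ E₁+E₂+E₃+E₄ ≤ C₁·(n²/S₀ + M·n^{2δ}/S₀²)`. -/
theorem stmt6 (τ₀ c a : ℝ) (hτ0 : 0 < τ₀) (hτ1 : τ₀ < 1)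
    (hc0 : 0 < c) (hc1 : c < 1) (ha : 0 < a) :
    ∃ c₁ C₁ : ℝ, 0 < c₁ ∧ 0 < C₁ ∧ ∃ N : ℕ, ∀ n : ℕ, N ≤ n →
      ∀ M : ℕ, M ∣ n → 3 ≤ M → (M : ℝ) ≤ a * (n : ℝ) ^ τ₀ →
      ∀ (δ : ℝ) (d : ℕ), 0 < δ → δ < 1 → (d : ℝ) = (n : ℝ) ^ δ → Even d → d < n / M →
        c₁ * ((n : ℝ) ^ 2 / (n : ℝ) ^ τ₀) ≤
          E1 n M ((n : ℝ) ^ τ₀) + E2 n M d c ((n : ℝ) ^ τ₀) +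
            E3 n M d c ((n : ℝ) ^ τ₀) + E4 n M d c ((n : ℝ) ^ τ₀) ∧
        E1 n M ((n : ℝ) ^ τ₀) + E2 n M d c ((n : ℝ) ^ τ₀) +
            E3 n M d c ((n : ℝ) ^ τ₀) + E4 n M d c ((n : ℝ) ^ τ₀) ≤
          C₁ * ((n : ℝ) ^ 2 / (n : ℝ) ^ τ₀ +
            (M : ℝ) * (n : ℝ) ^ (2 * δ) / ((n : ℝ) ^ τ₀) ^ 2) := by
  have hκpos : (0:ℝ) < 4 * a + 2 := by positivity
  set κ : ℝ := 4 * a + 2 with hκ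
  clear_value κ
  obtain ⟨N₀, hN₀⟩ := Filter.eventually_atTop.mp
    (((tendsto_rpow_atTop (by linarith : (0:ℝ) < 1 - τ₀)).comp
      tendsto_natCast_atTop_atTop).eventually_ge_atTop (2 + a * κ))
  refine ⟨(82 * κ)⁻¹, 3 + c⁻¹ ^ 2, by positivity, by positivity, max N₀ 3, ?_⟩
  intro n hn M hMdvd hM3 hMa δ d hδ0 hδ1 hd hdeven hdlt
  have hn3 : 3 ≤ n := le_trans (le_max_right _ _) hn
  have hxbig : 2 + a * κ ≤ (n:ℝ) ^ (1 - τ₀) :=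
    hN₀ n (le_trans (le_max_left _ _) hn)
  set S : ℝ := (n:ℝ) ^ τ₀ with hS
  set x : ℝ := (n:ℝ) ^ (1 - τ₀) with hxdef
  have hnR : (0:ℝ) < n := by exact_mod_cast (by omega : 0 < n)
  have h1n : (1:ℝ) ≤ n := by exact_mod_cast (by omega : 1 ≤ n)
  have hSpos : 0 < S := Real.rpow_pos_of_pos hnR _
  have hxpos : 0 < x := Real.rpow_pos_of_pos hnR _
  have hS1 : 1 ≤ S := by
    calc (1:ℝ) = (n:ℝ) ^ (0:ℝ) := (Real.rpow_zero _).symm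
      _ ≤ S := Real.rpow_le_rpow_of_exponent_le h1n hτ0.le
  have hSx : S * x = n := by
    rw [hS, hxdef, ← Real.rpow_add hnR]; norm_num
  have hxn : x = (n:ℝ) / S := by
    field_simp [← hSx]
    linarith [hSx, mul_comm x S]
  have hx2 : (2:ℝ) ≤ x := by linarith only [hxbig, mul_pos ha hκpos]
  clear_value S x
  have hMpos : 0 < M := by omega
  have hMR : (0:ℝ) < M := by exact_mod_cast hMpos
  set B := n / M with hB
  have hnMB : n = M * B := (Nat.mul_div_cancel' hMdvd).symm
  have hd1 : 1 ≤ d := by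
    have h1d : (1:ℝ) ≤ (d:ℝ) := by
      rw [hd]
      calc (1:ℝ) = (n:ℝ) ^ (0:ℝ) := (Real.rpow_zero _).symm
        _ ≤ _ := Real.rpow_le_rpow_of_exponent_le h1n hδ0.le
    exact_mod_cast h1d
  have hd2 : 2 ≤ d := by
    obtain ⟨t, ht⟩ := hdeven; omega
  have hB3 : 3 ≤ B := by omega
  have hB0 : 0 < B := by omega
  have hn0 : 0 < n := by omega
  have h3B : 3 * B ≤ n := by
    calc 3 * B ≤ M * B := Nat.mul_le_mul_right B hM3
      _ = n := hnMB.symm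
  have hBR : (B:ℝ) = (n:ℝ) / M := by
    rw [hB]; exact_mod_cast Nat.cast_div hMdvd (ne_of_gt hMR)
  have hBx : x / a ≤ (B:ℝ) := by
    rw [hBR]
    have haS : 0 < a * S := by positivity
    have h1 : (n:ℝ) / (a * S) ≤ (n:ℝ) / M :=
      div_le_div_of_nonneg_left hnR.le hMR hMa
    have h2 : (n:ℝ) / (a * S) = x / a := by
      rw [← hSx]; field_simp
    linarith
  set J₀ := Nat.floor x with hJ₀
  have hJ₀1 : 1 ≤ J₀ := Nat.le_floor (by push_cast; linarith)
  have hJ₀x : (J₀:ℝ) ≤ x := Nat.floor_le hxpos.le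
  have hxJ₀ : x < J₀ + 1 := Nat.lt_floor_add_one x
  have hJ₀half : x / 2 ≤ (J₀:ℝ) := by linarith
  clear_value J₀
  have hJ₀posR : (0:ℝ) < J₀ := by
    have : (1:ℝ) ≤ (J₀:ℝ) := by exact_mod_cast hJ₀1
    linarith
  set J := min (B / 2) J₀ with hJ
  have hJB : J ≤ B / 2 := min_le_left _ _
  have hJle' : J ≤ J₀ := min_le_right _ _
  have hJ1 : 1 ≤ J := le_min (by omega) hJ₀1
  have hJle : J ≤ J₀ := hJle'
  have hπ : π < 3.15 := Real.pi_lt_d2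
  have hπpos := Real.pi_pos
  have hπ41 : 1 + 4 * π ^ 2 ≤ 41 := by nlinarith [hπ, hπpos]
  -- LOWER BOUND
  have hterm_low : ∀ j : ℕ, 1 ≤ j → j ≤ J →
      ((1:ℝ) + 4 * π ^ 2)⁻¹ ≤ (1 + S ^ 2 * (2 - 2 * Real.cos (2 * π * j / n)))⁻¹ := by
    intro j hj1 hjJ
    have hD0 : (0:ℝ) ≤ 2 - 2 * Real.cos (2 * π * j / n) := by
      have := Real.cos_le_one (2 * π * j / n); linarith
    have hjx : (j:ℝ) ≤ x := by
      have : (j:ℝ) ≤ (J₀:ℝ) := by exact_mod_cast le_trans hjJ hJle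
      linarith
    have hSj : S * j ≤ n := by
      calc S * j ≤ S * x := mul_le_mul_of_nonneg_left hjx hSpos.le
        _ = n := hSx
    have hDle : 2 - 2 * Real.cos (2 * π * j / n) ≤ (2 * π * j / n) ^ 2 := dist_sq_le n j
    have hkey : S ^ 2 * (2 - 2 * Real.cos (2 * π * j / n)) ≤ 4 * π ^ 2 := by
      have h1 : S ^ 2 * (2 - 2 * Real.cos (2 * π * j / n)) ≤ S ^ 2 * (2 * π * j / n) ^ 2 :=
        mul_le_mul_of_nonneg_left hDle (sq_nonneg S)
      have h2 : S ^ 2 * (2 * π * j / n) ^ 2 = 4 * π ^ 2 * (S * j / n) ^ 2 := by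
        field_simp; ring
      have h3 : (S * j / n) ^ 2 ≤ 1 := by
        have hSjn : S * j / n ≤ 1 := by rw [div_le_one hnR]; exact hSj
        have hSjn0 : 0 ≤ S * j / n := by positivity
        exact pow_le_one₀ hSjn0 hSjn
      have h4 : 4 * π ^ 2 * (S * j / n) ^ 2 ≤ 4 * π ^ 2 * 1 :=
        mul_le_mul_of_nonneg_left h3 (by positivity)
      linarith only [h1, h2, h4]
    apply inv_anti₀
    · positivity
    · linarith
  have hE1low := E1_ge n M B J S hnMB hMpos hJB hJ1 hterm_low
  have hJhalfB : (J:ℝ) ≤ (B:ℝ) / 2 := by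
    have h1 : (J:ℝ) ≤ ((B / 2 : ℕ):ℝ) := by exact_mod_cast hJB
    have h2 : ((B / 2 : ℕ):ℝ) ≤ (B:ℝ) / 2 := Nat.cast_div_le
    linarith
  have hMBJ : (n:ℝ) / 2 ≤ (M:ℝ) * ((B:ℝ) - J) := by
    have hcast : (n:ℝ) = (M:ℝ) * B := by exact_mod_cast hnMB
    linarith only [hcast, mul_le_mul_of_nonneg_left hJhalfB hMR.le]
  have hJx : x / κ ≤ (J:ℝ) := by
    have hJcast : (J:ℝ) = min ((B/2 : ℕ):ℝ) (J₀:ℝ) := by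
      rw [hJ]; push_cast; rfl
    rw [hJcast]
    apply le_min
    · -- x/κ ≤ B/2 (nat cast)
      have h2 : ((B:ℝ) - 1) / 2 ≤ ((B / 2 : ℕ):ℝ) := by
        have : B - 1 ≤ 2 * (B / 2) := by omega
        have hnat : B ≤ 2 * (B / 2) + 1 := by omega
        have h3 : (B:ℝ) ≤ 2 * ((B / 2 : ℕ):ℝ) + 1 := by exact_mod_cast hnat
        linarith
      have haB : x ≤ (B:ℝ) * a := (div_le_iff₀ ha).mp hBx
      have hB3R : (3:ℝ) ≤ (B:ℝ) := by exact_mod_cast hB3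
      have h4 : x / κ ≤ ((B:ℝ) - 1) / 2 := by
        rw [div_le_div_iff₀ hκpos two_pos, hκ]
        have hxbig' : 2 + a * (4 * a + 2) ≤ x := by rw [hκ] at hxbig; exact hxbig
        linarith only [haB, hxbig', hB3R, sq_nonneg a]
      linarith only [h2, h4]
    · calc x / κ ≤ x / 2 := by
            apply div_le_div_of_nonneg_left hxpos.le two_pos
            rw [hκ]; linarith only [ha]
        _ ≤ (J₀:ℝ) := hJ₀half
  have hE2nn : 0 ≤ E2 n M d c S := by unfold E2; exact div_nonneg (Nat.cast_nonneg _) (by positivity)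
  have hE3nn : 0 ≤ E3 n M d c S := by
    unfold E3
    apply mul_nonneg (by positivity)
    apply Finset.sum_nonneg
    intro j _; positivity
  have hE4nn : 0 ≤ E4 n M d c S := by
    unfold E4
    apply mul_nonneg (by positivity)
    apply Finset.sum_nonneg
    intro j _; positivity
  have hlow : (82 * κ)⁻¹ * ((n:ℝ) ^ 2 / S) ≤
      E1 n M S + E2 n M d c S + E3 n M d c S + E4 n M d c S := by
    have h41 : (41:ℝ)⁻¹ ≤ ((1:ℝ) + 4 * π ^ 2)⁻¹ :=
      inv_anti₀ (by positivity) hπ41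
    have hab : (n:ℝ) / 2 * (x / κ) ≤ (M:ℝ) * ((B:ℝ) - J) * J :=
      mul_le_mul hMBJ hJx (by positivity) (le_trans (by positivity) hMBJ)
    have hchain : (n:ℝ) / 2 * (x / κ) * (41:ℝ)⁻¹ ≤
        (M:ℝ) * ((B:ℝ) - J) * J * ((1:ℝ) + 4 * π ^ 2)⁻¹ :=
      mul_le_mul hab h41 (by positivity) (le_trans (by positivity) hab)
    have heq : (n:ℝ) / 2 * (x / κ) * (41:ℝ)⁻¹ = (82 * κ)⁻¹ * ((n:ℝ) * x) := by
      field_simp; ring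
    have hn2S : (n:ℝ) ^ 2 / S = (n:ℝ) * x := by
      rw [hxn]; field_simp
    rw [hn2S]
    linarith only [hchain, heq, hE1low, hE2nn, hE3nn, hE4nn]
  refine ⟨hlow, ?_⟩
  -- UPPER BOUND
  set C : ℝ := (n:ℝ) ^ 2 / (16 * S ^ 2) with hC
  have hCpos : 0 < C := by positivity
  have hterm_up : ∀ m : ℕ, 1 ≤ m → m ≤ B - 1 →
      (1 + S ^ 2 * (2 - 2 * Real.cos (2 * π * m / n)))⁻¹ ≤ min 1 (C / (m:ℝ) ^ 2) := by
    intro m hm1 hmB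
    have hD0 : (0:ℝ) ≤ 2 - 2 * Real.cos (2 * π * m / n) := by
      have := Real.cos_le_one (2 * π * m / n); linarith
    have h2m : 2 * m ≤ n := by omega
    have hDge := dist_sq_ge n m hn0 h2m
    have hmR : (0:ℝ) < m := by exact_mod_cast hm1
    apply le_min
    · apply inv_le_one_of_one_le₀
      linarith only [mul_nonneg (sq_nonneg S) hD0]
    · have hlow2 : 16 * S ^ 2 * (m:ℝ) ^ 2 / (n:ℝ) ^ 2 ≤
          1 + S ^ 2 * (2 - 2 * Real.cos (2 * π * m / n)) := by
        have h5 : S ^ 2 * (16 * (m:ℝ) ^ 2 / (n:ℝ) ^ 2) ≤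
            S ^ 2 * (2 - 2 * Real.cos (2 * π * m / n)) :=
          mul_le_mul_of_nonneg_left hDge (sq_nonneg S)
        have heq : S ^ 2 * (16 * (m:ℝ) ^ 2 / (n:ℝ) ^ 2) =
            16 * S ^ 2 * (m:ℝ) ^ 2 / (n:ℝ) ^ 2 := by ring
        linarith only [h5, heq]
      have hpos2 : (0:ℝ) < 16 * S ^ 2 * (m:ℝ) ^ 2 / (n:ℝ) ^ 2 := by positivity
      have := inv_anti₀ hpos2 hlow2
      have heq2 : (16 * S ^ 2 * (m:ℝ) ^ 2 / (n:ℝ) ^ 2)⁻¹ = C / (m:ℝ) ^ 2 := by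
        rw [hC]; field_simp
      linarith only [this, heq2]
  have hE1up := E1_le n M B S hB.symm hB0 (fun j => min 1 (C / (j:ℝ) ^ 2))
    (fun j => le_min zero_le_one (by positivity)) hterm_up
  have hsum := sum_min_le B J₀ C hCpos.le hJ₀1
  have hCJ : C / J₀ ≤ 2 * C / x := by
    have h1 : C / (J₀:ℝ) ≤ C / (x / 2) :=
      div_le_div_of_nonneg_left hCpos.le (by positivity) hJ₀half
    have h2 : C / (x / 2) = 2 * C / x := by
      rw [div_div_eq_mul_div]; ring
    linarith
  have h2Cx : 2 * C / x = (n:ℝ) / (8 * S) := by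
    rw [hC, hxn]; field_simp; ring
  have hE1X : E1 n M S ≤ 3 * ((n:ℝ) ^ 2 / S) := by
    have hb1 : E1 n M S ≤ 2 * (n:ℝ) * ((J₀:ℝ) + C / J₀) := by
      calc E1 n M S ≤ 2 * (n:ℝ) * ∑ j ∈ Finset.Icc 1 (B - 1), min 1 (C / (j:ℝ) ^ 2) := hE1up
        _ ≤ 2 * (n:ℝ) * ((J₀:ℝ) + C / J₀) := by
            apply mul_le_mul_of_nonneg_left hsum (by positivity)
    have hb2 : (J₀:ℝ) + C / J₀ ≤ x + (n:ℝ) / (8 * S) := by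
      rw [← h2Cx]; linarith
    have hb3 : 2 * (n:ℝ) * (x + (n:ℝ) / (8 * S)) = 9 / 4 * ((n:ℝ) ^ 2 / S) := by
      rw [hxn]; field_simp; ring
    have hXpos : (0:ℝ) ≤ (n:ℝ) ^ 2 / S := by positivity
    linarith only [hb1, hb3, hXpos,
      mul_le_mul_of_nonneg_left hb2 (by positivity : (0:ℝ) ≤ 2 * (n:ℝ))]
  have hcard : ((TDiff n M d).card : ℝ) ≤ (n:ℝ) ^ 2 := by
    have h1 : (TDiff n M d).card ≤ Fintype.card (Fin n × Fin n) := Finset.card_le_univ _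
    have h2 : Fintype.card (Fin n × Fin n) = n * n := by simp
    have h3 : (TDiff n M d).card ≤ n * n := h1.trans_eq h2
    calc ((TDiff n M d).card : ℝ) ≤ ((n * n : ℕ):ℝ) := by exact_mod_cast h3
      _ = (n:ℝ) ^ 2 := by push_cast; ring
  have hE2X : E2 n M d c S ≤ c⁻¹ ^ 2 * ((n:ℝ) ^ 2 / S) := by
    unfold E2
    have hden : c ^ 2 * S ^ 2 ≤ 1 + c ^ 2 * S ^ 2 := by linarith
    calc ((TDiff n M d).card : ℝ) / (1 + c ^ 2 * S ^ 2)
        ≤ (n:ℝ) ^ 2 / (c ^ 2 * S ^ 2) :=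
          div_le_div₀ (by positivity) hcard (by positivity) hden
      _ ≤ (n:ℝ) ^ 2 / (c ^ 2 * S) := by
          apply div_le_div_of_nonneg_left (by positivity) (by positivity)
          linarith only [mul_nonneg (mul_nonneg (sq_nonneg c) hSpos.le) (sub_nonneg.mpr hS1)]
      _ = c⁻¹ ^ 2 * ((n:ℝ) ^ 2 / S) := by
          field_simp
  set Y : ℝ := (M:ℝ) * (n:ℝ) ^ (2 * δ) / S ^ 2 with hY
  have hYnn : 0 ≤ Y := by positivity
  have hdsq : (d:ℝ) ^ 2 = (n:ℝ) ^ (2 * δ) := by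
    rw [hd, ← Real.rpow_natCast ((n:ℝ) ^ δ) 2, ← Real.rpow_mul hnR.le]
    norm_num [mul_comm]
  have hE34 : ∀ k : ℕ, (k:ℝ) ≤ (d:ℝ) / 2 →
      (M:ℝ) * ∑ j ∈ Finset.Icc 1 k, (j:ℝ) / (1 + c ^ 2 * S ^ 2) ≤ c⁻¹ ^ 2 / 2 * Y := by
    intro k hk
    have hterm : ∀ j ∈ Finset.Icc 1 k, (j:ℝ) / (1 + c ^ 2 * S ^ 2) ≤ (k:ℝ) / (c ^ 2 * S ^ 2) := by
      intro j hj
      rw [Finset.mem_Icc] at hj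
      apply div_le_div₀ (by positivity) (by exact_mod_cast hj.2) (by positivity)
      linarith
    have hsum2 := Finset.sum_le_card_nsmul _ _ _ hterm
    rw [Nat.card_Icc] at hsum2
    simp only [Nat.add_sub_cancel, nsmul_eq_mul] at hsum2
    have hknn : (0:ℝ) ≤ k := by positivity
    have hMk : (M:ℝ) * ∑ j ∈ Finset.Icc 1 k, (j:ℝ) / (1 + c ^ 2 * S ^ 2)
        ≤ (M:ℝ) * ((k:ℝ) * ((k:ℝ) / (c ^ 2 * S ^ 2))) := by
      apply mul_le_mul_of_nonneg_left hsum2 (by positivity)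
    have hkd : (M:ℝ) * ((k:ℝ) * ((k:ℝ) / (c ^ 2 * S ^ 2))) ≤
        (M:ℝ) * (((d:ℝ) / 2) * (((d:ℝ) / 2) / (c ^ 2 * S ^ 2))) := by
      have hd0 : (0:ℝ) ≤ (d:ℝ) / 2 := by positivity
      gcongr
    have heq : (M:ℝ) * (((d:ℝ) / 2) * (((d:ℝ) / 2) / (c ^ 2 * S ^ 2))) =
        c⁻¹ ^ 2 / 4 * ((M:ℝ) * (d:ℝ) ^ 2 / S ^ 2) := by
      field_simp; ring
    have hfin : c⁻¹ ^ 2 / 4 * ((M:ℝ) * (d:ℝ) ^ 2 / S ^ 2) ≤ c⁻¹ ^ 2 / 2 * Y := by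
      rw [hY, hdsq]
      have hynn : (0:ℝ) ≤ (M:ℝ) * (n:ℝ) ^ (2 * δ) / S ^ 2 := by positivity
      linarith only [mul_nonneg (sq_nonneg c⁻¹) hynn]
    linarith
  have hE3X : E3 n M d c S ≤ c⁻¹ ^ 2 / 2 * Y := by
    apply hE34
    have : ((d / 2 : ℕ):ℝ) ≤ (d:ℝ) / 2 := Nat.cast_div_le
    exact this
  have hE4X : E4 n M d c S ≤ c⁻¹ ^ 2 / 2 * Y := by
    apply hE34
    have h1 : d / 2 - 1 ≤ d / 2 := by omega
    have h2 : ((d / 2 - 1 : ℕ):ℝ) ≤ ((d / 2 : ℕ):ℝ) := by exact_mod_cast h1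
    have : ((d / 2 : ℕ):ℝ) ≤ (d:ℝ) / 2 := Nat.cast_div_le
    linarith
  have hXnn : (0:ℝ) ≤ (n:ℝ) ^ 2 / S := by positivity
  have hgoal : E1 n M S + E2 n M d c S + E3 n M d c S + E4 n M d c S ≤
      (3 + c⁻¹ ^ 2) * ((n:ℝ) ^ 2 / S + Y) := by
    have hexp : (3 + c⁻¹ ^ 2) * ((n:ℝ) ^ 2 / S + Y) =
        3 * ((n:ℝ) ^ 2 / S) + c⁻¹ ^ 2 * ((n:ℝ) ^ 2 / S) + 3 * Y + c⁻¹ ^ 2 * Y := by ring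
    have hcY : c⁻¹ ^ 2 / 2 * Y + c⁻¹ ^ 2 / 2 * Y = c⁻¹ ^ 2 * Y := by ring
    linarith only [hexp, hcY, hE1X, hE2X, hE3X, hE4X, hYnn, hXnn]
  exact hgoal

end AuxStmt6
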